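/- Let H be a complex Hilbert space with inner product ⟪·,·⟫ conjugate-linear in the first argument. Let R be a pseudo-resolvent on the nonreal points of ℂ (R z : H → H bounded, R z - R w = (z - w) • (R z ∘ R w) for all nonreal z, w) such that the Hilbert adjoint of R z equals R (conj z) for every nonreal z. Fix a nonreal w₀ and ψ₀ ∈ H, set ψ(z) := ψ₀ + (z - w₀) • (R z ψ₀) for nonreal z, and assume the topological closure of the ℂ-linear span of {ψ(z) : z nonreal} equals H. Then there exists a map J : H → H that is additive, conjugate-homogeneous (J(c • x) = conj(c) • (J x)), norm-preserving, an involution (J (J x) = x for all x ∈ H), satisfies J (ψ(z)) = ψ(conj z) for every nonreal z, and commutes with the pseudo-resolvent in the sense that J (R w x) = R (conj w) (J x) for every nonreal w and every x ∈ H. -/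

import Mathlib

open scoped InnerProductSpace ComplexConjugate
open Filter

private abbrev NRpt : Type := {z : ℂ // z.im ≠ 0}

private def nrConj (v : NRpt) : NRpt :=
  ⟨(starRingEnd ℂ) v.1, by simp [Complex.conj_im, v.2]⟩

private lemma nrConj_invol (v : NRpt) : nrConj (nrConj v) = v :=
  Subtype.ext (by simp [nrConj])

private noncomputable def auxC : (NRpt →₀ ℂ) → (NRpt →₀ ℂ) :=
  fun f => f.sum fun z c => Finsupp.single (nrConj z) ((starRingEnd ℂ) c)

private lemma auxC_zero : auxC 0 = 0 := Finsupp.sum_zero_index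

private lemma auxC_single (z : NRpt) (a : ℂ) :
    auxC (Finsupp.single z a) = Finsupp.single (nrConj z) ((starRingEnd ℂ) a) :=
  Finsupp.sum_single_index (by simp)

private lemma auxC_add (f g : NRpt →₀ ℂ) : auxC (f + g) = auxC f + auxC g :=
  Finsupp.sum_add_index (by simp) (by intros; rw [map_add, Finsupp.single_add])

private lemma auxC_smul (c : ℂ) (f : NRpt →₀ ℂ) :
    auxC (c • f) = (starRingEnd ℂ) c • auxC f := by
  unfold auxC
  rw [Finsupp.sum_smul_index' (by simp), Finsupp.smul_sum]
  exact Finsupp.sum_congr fun z _ => by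
    rw [smul_eq_mul, map_mul, Finsupp.smul_single, smul_eq_mul]

private lemma auxC_invol (f : NRpt →₀ ℂ) : auxC (auxC f) = f := by
  induction f using Finsupp.induction_linear with
  | zero => rw [auxC_zero, auxC_zero]
  | add f g hf hg => rw [auxC_add, auxC_add, hf, hg]
  | single z a => rw [auxC_single, auxC_single, nrConj_invol, Complex.conj_conj]

private lemma auxC_neg (f : NRpt →₀ ℂ) : auxC (-f) = -auxC f := by
  have := auxC_smul (-1) f
  simpa using this

private lemma auxC_sub (f g : NRpt →₀ ℂ) : auxC (f - g) = auxC f - auxC g := by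
  rw [sub_eq_add_neg, auxC_add, auxC_neg, sub_eq_add_neg]

set_option maxHeartbeats 2000000 in
/-- Existence of an antilinear isometric involution `J` with `J ψ(z) = ψ(conj z)`
commuting with a pseudo-resolvent `R` whose adjoint satisfies `(R z)† = R (conj z)`,
provided the defect family `ψ(z) = ψ₀ + (z - w₀) • R z ψ₀` is total in `H`. -/
theorem stmt8 {H : Type*} [NormedAddCommGroup H] [InnerProductSpace ℂ H] [CompleteSpace H]
    (R : ℂ → H →L[ℂ] H)
    (hres : ∀ z w : ℂ, z.im ≠ 0 → w.im ≠ 0 → R z - R w = (z - w) • (R z ∘L R w))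
    (hadj : ∀ z : ℂ, z.im ≠ 0 → ContinuousLinearMap.adjoint (R z) = R (conj z))
    (w₀ : ℂ) (hw₀ : w₀.im ≠ 0) (ψ₀ : H)
    (ψ : ℂ → H) (hψ : ∀ z : ℂ, z.im ≠ 0 → ψ z = ψ₀ + (z - w₀) • (R z ψ₀))
    (htotal : (Submodule.span ℂ {x : H | ∃ z : ℂ, z.im ≠ 0 ∧ x = ψ z}).topologicalClosure = ⊤) :
    ∃ J : H → H,
      (∀ x y : H, J (x + y) = J x + J y) ∧
      (∀ (c : ℂ) (x : H), J (c • x) = conj c • J x) ∧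
      (∀ x : H, ‖J x‖ = ‖x‖) ∧
      (∀ x : H, J (J x) = x) ∧
      (∀ z : ℂ, z.im ≠ 0 → J (ψ z) = ψ (conj z)) ∧
      (∀ w : ℂ, w.im ≠ 0 → ∀ x : H, J (R w x) = R (conj w) (J x)) := by
  classical
  -- basic conjugation fact
  have hcim : ∀ z : ℂ, z.im ≠ 0 → (conj z).im ≠ 0 := fun z hz => by
    simp [Complex.conj_im, hz]
  -- commutativity of the pseudo-resolvent family
  have hcomm : ∀ z w : ℂ, z.im ≠ 0 → w.im ≠ 0 → ∀ v : H,
      R z (R w v) = R w (R z v) := by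
    intro z w hz hw v
    rcases eq_or_ne z w with rfl | hzw
    · rfl
    · have h1 := hres z w hz hw
      have h2 := hres w z hw hz
      have h3 : (z - w) • (R z ∘L R w) = (z - w) • (R w ∘L R z) := by
        rw [← h1]
        have : R z - R w = -(R w - R z) := by abel
        rw [this, h2, ← neg_smul, neg_sub]
      have h4 : (R z ∘L R w) = (R w ∘L R z) :=
        smul_right_injective _ (sub_ne_zero.2 hzw) h3
      exact congrArg (fun T : H →L[ℂ] H => T v) h4
  -- first resolvent identity applied to the defect family
  have hkey : ∀ z w : ℂ, z.im ≠ 0 → w.im ≠ 0 → z ≠ w →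
      (z - w) • (R w (ψ z)) = ψ z - ψ w := by
    intro z w hz hw hzw
    have h1 : (z - w) • (R w (R z ψ₀)) = R z ψ₀ - R w ψ₀ := by
      have h := congrArg (fun T : H →L[ℂ] H => T ψ₀) (hres z w hz hw)
      simp only [ContinuousLinearMap.sub_apply, ContinuousLinearMap.smul_apply,
        ContinuousLinearMap.comp_apply] at h
      rw [← hcomm z w hz hw ψ₀]
      exact h.symm
    rw [hψ z hz, hψ w hw]
    rw [map_add, map_smul, smul_add, smul_comm (z - w) (z - w₀), h1]
    module
  -- adjoint relation on inner products
  have hadj' : ∀ z : ℂ, z.im ≠ 0 → ∀ x y : H,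
      ⟪x, R z y⟫_ℂ = ⟪R (conj z) x, y⟫_ℂ := by
    intro z hz x y
    have h : ContinuousLinearMap.adjoint (R (conj z)) = R z := by
      rw [hadj (conj z) (hcim z hz), Complex.conj_conj]
    rw [← h, ContinuousLinearMap.adjoint_inner_right]
  -- kernel symmetry
  have hform : ∀ a b : ℂ, a.im ≠ 0 → b.im ≠ 0 → a ≠ conj b →
      ⟪ψ a, ψ b⟫_ℂ = ⟪ψ a, ψ₀⟫_ℂ +
        (b - w₀) * ((⟪ψ a, ψ₀⟫_ℂ - ⟪ψ (conj b), ψ₀⟫_ℂ) / (conj a - b)) := by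
    intro a b ha hb hab
    have hcb : (conj b).im ≠ 0 := hcim b hb
    have hkey' := hkey a (conj b) ha hcb hab
    have hne : a - conj b ≠ 0 := sub_ne_zero.2 hab
    have h1 : R (conj b) (ψ a) = (a - conj b)⁻¹ • (ψ a - ψ (conj b)) := by
      rw [← hkey', smul_smul, inv_mul_cancel₀ hne, one_smul]
    have hne2 : conj a - b ≠ 0 := by
      intro h
      apply hne
      have := congrArg (starRingEnd ℂ) (sub_eq_zero.mp h)
      rw [Complex.conj_conj] at this
      rw [this, sub_self]
    conv_lhs => rw [hψ b hb]
    rw [inner_add_right, inner_smul_right, hadj' b hb (ψ a) ψ₀, h1,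
      inner_smul_left, inner_sub_left, map_inv₀, map_sub, Complex.conj_conj]
    field_simp
  have hker : ∀ a b : ℂ, a.im ≠ 0 → b.im ≠ 0 →
      ⟪ψ a, ψ b⟫_ℂ = ⟪ψ (conj b), ψ (conj a)⟫_ℂ := by
    intro a b ha hb
    by_cases hab : a = conj b
    · rw [hab, Complex.conj_conj]
    · have h1 := hform a b ha hb hab
      have h2 := hform (conj b) (conj a) (hcim b hb) (hcim a ha)
        (by rw [Complex.conj_conj]; exact fun h => hab h.symm)
      simp only [Complex.conj_conj] at h2
      rw [h1, h2]
      have hne : conj a - b ≠ 0 := by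
        intro h
        apply hab
        have := congrArg (starRingEnd ℂ) (sub_eq_zero.mp h)
        rw [Complex.conj_conj] at this
        rw [← this]
      have hne2 : b - conj a ≠ 0 := fun h => hne (by rw [← neg_sub, h, neg_zero])
      field_simp
      ring
  -- the linear combination map
  set Φ : NRpt → H := fun v => ψ v.1 with hΦ
  set L := Finsupp.linearCombination ℂ Φ with hLdef
  have hLsingle : ∀ (v : NRpt) (a : ℂ), L (Finsupp.single v a) = a • ψ v.1 := by
    intro v a; rw [hLdef, Finsupp.linearCombination_single]
  have hLCsingle : ∀ (v : NRpt) (a : ℂ),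
      L (auxC (Finsupp.single v a)) = (starRingEnd ℂ) a • ψ (conj v.1) := by
    intro v a; rw [auxC_single, hLsingle]; rfl
  have hinner : ∀ f g, ⟪L (auxC f), L (auxC g)⟫_ℂ = ⟪L g, L f⟫_ℂ := by
    intro f g
    induction f using Finsupp.induction_linear with
    | zero => simp [auxC_zero]
    | add f₁ f₂ h1 h2 => rw [auxC_add, map_add, inner_add_left, h1, h2, map_add,
        inner_add_right]
    | single z a =>
      induction g using Finsupp.induction_linear with
      | zero => simp [auxC_zero]
      | add g₁ g₂ h1 h2 => rw [auxC_add, map_add, inner_add_right, h1, h2, map_add,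
          inner_add_left]
      | single w b =>
        rw [hLCsingle, hLCsingle, hLsingle, hLsingle, inner_smul_left,
          inner_smul_right, inner_smul_left, inner_smul_right,
          hker (conj z.1) (conj w.1) (by simpa [Complex.conj_im] using z.2)
            (by simpa [Complex.conj_im] using w.2),
          Complex.conj_conj, Complex.conj_conj, Complex.conj_conj]
        ring
  have hnorm : ∀ f, ‖L (auxC f)‖ = ‖L f‖ := by
    intro f
    have h := hinner f f
    have h2 : RCLike.re ⟪L (auxC f), L (auxC f)⟫_ℂ = RCLike.re ⟪L f, L f⟫_ℂ := by
      rw [h]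
    rw [inner_self_eq_norm_sq, inner_self_eq_norm_sq] at h2
    rw [← Real.sqrt_sq (norm_nonneg (L (auxC f))), h2,
      Real.sqrt_sq (norm_nonneg (L f))]
  set p := LinearMap.range L with hpdef
  have hpdense : Dense (p : Set H) := by
    have hps : p = Submodule.span ℂ {x : H | ∃ z : ℂ, z.im ≠ 0 ∧ x = ψ z} := by
      rw [hpdef, Finsupp.range_linearCombination]
      congr 1
      ext x
      constructor
      · rintro ⟨v, rfl⟩; exact ⟨v.1, v.2, rfl⟩
      · rintro ⟨z, hz, rfl⟩; exact ⟨⟨z, hz⟩, rfl⟩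
    rw [dense_iff_closure_eq, hps, ← Submodule.topologicalClosure_coe, htotal]
    rfl
  have hwd : ∀ f f', L f = L f' → L (auxC f) = L (auxC f') := by
    intro f f' h
    have h2 : ‖L (auxC f) - L (auxC f')‖ = 0 := by
      rw [← map_sub, ← auxC_sub, hnorm, map_sub, h, sub_self, norm_zero]
    exact sub_eq_zero.mp (norm_eq_zero.mp h2)
  have hsel : ∀ x : p, ∃ f, L f = (x : H) := fun x => LinearMap.mem_range.mp x.2
  obtain ⟨J₀, hJ₀⟩ : ∃ J₀ : p →ₛₗ[starRingEnd ℂ] H,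
      ∀ (x : p) (f : NRpt →₀ ℂ), L f = ↑x → J₀ x = L (auxC f) := by
    refine ⟨{ toFun := fun x => L (auxC (hsel x).choose),
              map_add' := ?_, map_smul' := ?_ }, ?_⟩
    · intro x y
      show L (auxC (hsel (x + y)).choose) =
        L (auxC (hsel x).choose) + L (auxC (hsel y).choose)
      have hxy : L ((hsel x).choose + (hsel y).choose) = ↑(x + y) := by
        rw [map_add, (hsel x).choose_spec, (hsel y).choose_spec, Submodule.coe_add]
      have := hwd (hsel (x + y)).choose ((hsel x).choose + (hsel y).choose)
        ((hsel (x + y)).choose_spec.trans hxy.symm)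
      rw [this, auxC_add, map_add]
    · intro c x
      show L (auxC (hsel (c • x)).choose) =
        (starRingEnd ℂ) c • L (auxC (hsel x).choose)
      have hcx : L (c • (hsel x).choose) = ↑(c • x) := by
        rw [map_smul, (hsel x).choose_spec, Submodule.coe_smul]
      have := hwd (hsel (c • x)).choose (c • (hsel x).choose)
        ((hsel (c • x)).choose_spec.trans hcx.symm)
      rw [this, auxC_smul, map_smul]
    · intro x f h
      exact hwd _ _ ((hsel x).choose_spec.trans h.symm)
  have hJ₀norm : ∀ x : p, ‖J₀ x‖ = ‖x‖ := by
    intro x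
    obtain ⟨f, hf⟩ := hsel x
    rw [hJ₀ x f hf, hnorm, hf]
    rfl
  set Jcl : p →SL[starRingEnd ℂ] H :=
    J₀.mkContinuous 1 (fun x => le_of_eq (by rw [hJ₀norm, one_mul])) with hJcl
  have hdr : DenseRange (⇑(p.subtypeL)) := by
    have : ⇑(p.subtypeL) = (Subtype.val : p → H) := rfl
    rw [this, denseRange_subtype_val]
    exact hpdense
  have hui : IsUniformInducing (⇑(p.subtypeL)) := isometry_subtype_coe.isUniformInducing
  set Jc := Jcl.extend p.subtypeL with hJcdef
  have hJcp : ∀ x : p, Jc ↑x = J₀ x := by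
    intro x
    have := ContinuousLinearMap.extend_eq Jcl hdr hui x
    rw [hJcdef]
    exact this
  have hJcL : ∀ f, Jc (L f) = L (auxC f) := by
    intro f
    have hm : L f ∈ p := LinearMap.mem_range.mpr ⟨f, rfl⟩
    have h1 : Jc (L f) = J₀ ⟨L f, hm⟩ := hJcp ⟨L f, hm⟩
    rw [h1, hJ₀ ⟨L f, hm⟩ f rfl]
  -- extension principle
  have hext : ∀ F G : H → H, Continuous F → Continuous G →
      (∀ x : p, F ↑x = G ↑x) → ∀ x, F x = G x := by
    intro F G hF hG h x
    have heq : Set.EqOn F G (p : Set H) := fun y hy => h ⟨y, hy⟩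
    exact congrFun (Continuous.ext_on hpdense hF hG heq) x
  have hJψ : ∀ z : ℂ, z.im ≠ 0 → Jc (ψ z) = ψ (conj z) := by
    intro z hz
    have h1 : ψ z = L (Finsupp.single ⟨z, hz⟩ 1) := by rw [hLsingle, one_smul]
    rw [h1, hJcL, hLCsingle, map_one, one_smul]
  have hnormJ : ∀ x : H, ‖Jc x‖ = ‖x‖ := by
    intro x
    have heq : Set.EqOn (fun x => ‖Jc x‖) (fun x => ‖x‖) (p : Set H) := by
      intro y hy
      show ‖Jc y‖ = ‖y‖
      have : Jc y = J₀ ⟨y, hy⟩ := hJcp ⟨y, hy⟩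
      rw [this, hJ₀norm]
      rfl
    exact congrFun (Continuous.ext_on hpdense (Jc.continuous.norm) continuous_norm heq) x
  have hJJ : ∀ x : H, Jc (Jc x) = x := by
    apply hext (fun x => Jc (Jc x)) id (Jc.continuous.comp Jc.continuous) continuous_id
    intro x
    obtain ⟨f, hf⟩ := hsel x
    show Jc (Jc ↑x) = ↑x
    rw [← hf, hJcL f, hJcL (auxC f), auxC_invol]
  -- convergence of resolvents along real shifts
  set t : ℕ → ℂ := fun n => ((1 / ((n : ℝ) + 1) : ℝ) : ℂ) with ht
  have htne : ∀ n, t n ≠ 0 := by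
    intro n
    rw [ht]
    simp only [ne_eq, Complex.ofReal_eq_zero]
    positivity
  have htim : ∀ (w : ℂ) (n : ℕ), (w + t n).im = w.im := by
    intro w n
    rw [ht]
    simp [Complex.add_im, Complex.ofReal_im]
  have htconj : ∀ n, conj (t n) = t n := fun n => Complex.conj_ofReal _
  have htnorm : Tendsto (fun n => ‖t n‖) atTop (nhds 0) := by
    have : (fun n : ℕ => ‖t n‖) = fun n : ℕ => 1 / ((n : ℝ) + 1) := by
      funext n
      rw [ht]
      simp only [Complex.norm_real, Real.norm_eq_abs]
      rw [abs_of_pos (by positivity)]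
    rw [this]
    exact tendsto_one_div_add_atTop_nhds_zero_nat
  have ht0 : Tendsto t atTop (nhds 0) := by
    rw [tendsto_zero_iff_norm_tendsto_zero]
    exact htnorm
  have hRtend : ∀ w : ℂ, w.im ≠ 0 → ∀ v : H,
      Tendsto (fun n : ℕ => R (w + t n) v) atTop (nhds (R w v)) := by
    intro w hw v
    rw [← tendsto_sub_nhds_zero_iff]
    have hsm : Tendsto (fun n => ‖t n‖ * ‖R w‖) atTop (nhds 0) := by
      have := htnorm.mul_const ‖R w‖
      rwa [zero_mul] at this
    have hEv : ∀ᶠ n in atTop, ‖t n‖ * ‖R w‖ < 1 / 2 :=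
      hsm.eventually_lt_const (by norm_num)
    have hbd : ∀ᶠ n in atTop, ‖R (w + t n) v - R w v‖ ≤
        (2 * ‖R w‖ ^ 2 * ‖v‖) * ‖t n‖ := by
      filter_upwards [hEv] with n hn
      have hnsm : ‖t n • (R w)‖ < 1 / 2 := by
        rw [norm_smul]; exact hn
      have h1 : ‖t n • (R w)‖ < 1 := lt_trans hnsm (by norm_num)
      set u := Units.oneSub (t n • (R w)) h1 with hu
      have huval : (↑u : H →L[ℂ] H) = 1 - t n • (R w) := rfl
      have hz : (w + t n).im ≠ 0 := by rw [htim w n]; exact hw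
      have hid : R (w + t n) * ↑u = R w := by
        rw [huval]
        have h := hres (w + t n) w hz hw
        rw [add_sub_cancel_left] at h
        have : R (w + t n) ∘L R w = R (w + t n) * R w := rfl
        rw [this] at h
        calc R (w + t n) * (1 - t n • R w)
            = R (w + t n) - t n • (R (w + t n) * R w) := by
              rw [mul_sub, mul_one, mul_smul_comm]
          _ = R (w + t n) - (R (w + t n) - R w) := by rw [← h]
          _ = R w := by abel
      have hRz : R (w + t n) = R w * ↑u⁻¹ := by
        rw [Units.eq_mul_inv_iff_mul_eq]
        exact hid
      have hinv : (↑u⁻¹ : H →L[ℂ] H) = 1 + (t n • R w) * ↑u⁻¹ := by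
        have h2 : (↑u : H →L[ℂ] H) * ↑u⁻¹ = 1 := u.mul_inv
        rw [huval, sub_mul, one_mul] at h2
        exact sub_eq_iff_eq_add.mp h2
      have hinvnorm : ‖(↑u⁻¹ : H →L[ℂ] H)‖ ≤ 2 := by
        have h3 : ‖(↑u⁻¹ : H →L[ℂ] H)‖ ≤ 1 + ‖t n • R w‖ * ‖(↑u⁻¹ : H →L[ℂ] H)‖ := by
          calc ‖(↑u⁻¹ : H →L[ℂ] H)‖ = ‖1 + (t n • R w) * ↑u⁻¹‖ := by rw [← hinv]
            _ ≤ ‖(1 : H →L[ℂ] H)‖ + ‖(t n • R w) * ↑u⁻¹‖ := norm_add_le _ _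
            _ ≤ 1 + ‖t n • R w‖ * ‖(↑u⁻¹ : H →L[ℂ] H)‖ := by
                gcongr
                · exact ContinuousLinearMap.norm_id_le
                · exact norm_mul_le _ _
        nlinarith [norm_nonneg (↑u⁻¹ : H →L[ℂ] H), hnsm, norm_nonneg (t n • R w)]
      have hdiff : R (w + t n) v - R w v = (R w) (((t n • R w) * ↑u⁻¹) v) := by
        rw [hRz]
        have h4 : (↑u⁻¹ : H →L[ℂ] H) = 1 + (t n • R w) * ↑u⁻¹ := hinv
        calc (R w * ↑u⁻¹) v - R w v
            = (R w) ((↑u⁻¹ : H →L[ℂ] H) v) - R w v := rfl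
          _ = (R w) ((1 + (t n • R w) * ↑u⁻¹) v) - R w v := by rw [← h4]
          _ = (R w) (v + ((t n • R w) * ↑u⁻¹) v) - R w v := rfl
          _ = (R w) (((t n • R w) * ↑u⁻¹) v) := by rw [map_add]; abel
      rw [hdiff]
      calc ‖(R w) (((t n • R w) * ↑u⁻¹) v)‖
          ≤ ‖R w‖ * ‖((t n • R w) * ↑u⁻¹) v‖ := ContinuousLinearMap.le_opNorm _ _
        _ ≤ ‖R w‖ * (‖(t n • R w) * ↑u⁻¹‖ * ‖v‖) := by
            gcongr; exact ContinuousLinearMap.le_opNorm _ _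
        _ ≤ ‖R w‖ * ((‖t n • R w‖ * ‖(↑u⁻¹ : H →L[ℂ] H)‖) * ‖v‖) := by
            gcongr; exact norm_mul_le _ _
        _ ≤ ‖R w‖ * (((‖t n‖ * ‖R w‖) * 2) * ‖v‖) := by
            rw [norm_smul]
            gcongr
        _ = (2 * ‖R w‖ ^ 2 * ‖v‖) * ‖t n‖ := by ring
    have hlim : Tendsto (fun n => (2 * ‖R w‖ ^ 2 * ‖v‖) * ‖t n‖) atTop (nhds 0) := by
      have := htnorm.const_mul (2 * ‖R w‖ ^ 2 * ‖v‖)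
      rwa [mul_zero] at this
    exact squeeze_zero_norm' hbd hlim
  have hψtend : ∀ w : ℂ, w.im ≠ 0 →
      Tendsto (fun n : ℕ => ψ (w + t n)) atTop (nhds (ψ w)) := by
    intro w hw
    have heq : ∀ n : ℕ, ψ (w + t n) = ψ₀ + (w + t n - w₀) • (R (w + t n) ψ₀) :=
      fun n => hψ (w + t n) (by rw [htim w n]; exact hw)
    rw [hψ w hw]
    have hsc : Tendsto (fun n => w + t n - w₀) atTop (nhds (w - w₀)) := by
      have h1 : Tendsto (fun n : ℕ => w + t n) atTop (nhds (w + 0)) :=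
        tendsto_const_nhds.add ht0
      rw [add_zero] at h1
      exact h1.sub_const w₀
    have := tendsto_const_nhds (x := ψ₀) |>.add (hsc.smul (hRtend w hw ψ₀))
    exact this.congr (fun n => (heq n).symm)
  -- the core commutation relation on the defect family
  have hcore' : ∀ z w : ℂ, z.im ≠ 0 → w.im ≠ 0 → z ≠ w →
      Jc (R w (ψ z)) = R (conj w) (ψ (conj z)) := by
    intro z w hz hw hzw
    have hne : z - w ≠ 0 := sub_ne_zero.2 hzw
    have h3 : R w (ψ z) = (z - w)⁻¹ • (ψ z - ψ w) := by
      rw [← hkey z w hz hw hzw, smul_smul, inv_mul_cancel₀ hne, one_smul]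
    have hzwc : conj z ≠ conj w := by
      intro h
      apply hzw
      have := congrArg (starRingEnd ℂ) h
      simpa using this
    have hnec : conj z - conj w ≠ 0 := sub_ne_zero.2 hzwc
    have h4 : R (conj w) (ψ (conj z)) = (conj z - conj w)⁻¹ • (ψ (conj z) - ψ (conj w)) := by
      rw [← hkey (conj z) (conj w) (hcim z hz) (hcim w hw) hzwc, smul_smul,
        inv_mul_cancel₀ hnec, one_smul]
    rw [h3, ContinuousLinearMap.map_smulₛₗ, map_sub, hJψ z hz, hJψ w hw, h4]
    congr 1
    rw [map_inv₀, map_sub]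
  have hcore : ∀ z w : ℂ, z.im ≠ 0 → w.im ≠ 0 →
      Jc (R w (ψ z)) = R (conj w) (ψ (conj z)) := by
    intro z w hz hw
    rcases ne_or_eq z w with hzw | rfl
    · exact hcore' z w hz hw hzw
    · have hseq : ∀ n, Jc (R z (ψ (z + t n))) = R (conj z) (ψ (conj z + t n)) := by
        intro n
        have hzn : (z + t n).im ≠ 0 := by rw [htim]; exact hz
        have hne : z + t n ≠ z := by
          intro h
          exact htne n (by simpa using congrArg (fun x => x - z) h)
        have h := hcore' (z + t n) z hzn hz hne
        rw [map_add, htconj n] at h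
        exact h
      have hL1 : Tendsto (fun n => Jc (R z (ψ (z + t n)))) atTop
          (nhds (Jc (R z (ψ z)))) :=
        (Jc.continuous.tendsto _).comp (((R z).continuous.tendsto _).comp (hψtend z hz))
      have hL2 : Tendsto (fun n => R (conj z) (ψ (conj z + t n))) atTop
          (nhds (R (conj z) (ψ (conj z)))) :=
        ((R (conj z)).continuous.tendsto _).comp (hψtend (conj z) (hcim z hz))
      exact tendsto_nhds_unique (hL1.congr hseq) hL2
  -- commutation with the pseudo-resolvent everywhere
  have hRc : ∀ w : ℂ, w.im ≠ 0 → ∀ x : H, Jc (R w x) = R (conj w) (Jc x) := by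
    intro w hw
    apply hext (fun x => Jc (R w x)) (fun x => R (conj w) (Jc x))
      (Jc.continuous.comp (R w).continuous) ((R (conj w)).continuous.comp Jc.continuous)
    intro x
    suffices hh : ∀ f, Jc (R w (L f)) = R (conj w) (Jc (L f)) by
      obtain ⟨f, hf⟩ := hsel x
      show Jc (R w ↑x) = R (conj w) (Jc ↑x)
      rw [← hf]
      exact hh f
    intro f
    induction f using Finsupp.induction_linear with
    | zero => simp
    | add f g hf hg => simp only [map_add, hf, hg]
    | single v a =>
      rw [hLsingle, map_smul, ContinuousLinearMap.map_smulₛₗ, hcore v.1 w v.2 hw,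
        ContinuousLinearMap.map_smulₛₗ, hJψ v.1 v.2, map_smul]
  exact ⟨Jc, fun x y => map_add Jc x y, fun c x => ContinuousLinearMap.map_smulₛₗ Jc c x,
    hnormJ, hJJ, hJψ, hRc⟩
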